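/- Let B_n, B be convex sets in R^p with B_n → B in Hausdorff distance, and let W_n be random vectors in R^p converging in distribution to W, where W has a continuous bounded density with respect to Lebesgue measure. Then P[W_n ∈ B_n] → P[W ∈ B]. -/

import Mathlib

open Filter MeasureTheory
open scoped NNReal ENNReal

/-- Separation lemma: if the closed `δ`-ball around `x` is contained in the `δ'`-cthickening
of a closed convex set `K` with `δ' < δ`, then `x ∈ K`. -/
lemma key_sep {E : Type*} [NormedAddCommGroup E] [NormedSpace ℝ E] {K : Set E}
    (hK : Convex ℝ K) (hKc : IsClosed K) {x : E} {δ δ' : ℝ} (h0 : 0 ≤ δ') (hδ : δ' < δ)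
    (h : Metric.closedBall x δ ⊆ Metric.cthickening δ' K) : x ∈ K := by
  have hδ0 : (0:ℝ) < δ := lt_of_le_of_lt h0 hδ
  have hxmem : x ∈ Metric.cthickening δ' K := h (Metric.mem_closedBall_self hδ0.le)
  have hKne : K.Nonempty := by
    rcases Set.eq_empty_or_nonempty K with hne | hne
    · rw [hne, Metric.cthickening_empty] at hxmem
      exact absurd hxmem (Set.notMem_empty x)
    · exact hne
  by_contra hx
  obtain ⟨f, u, hfK, hfx⟩ := geometric_hahn_banach_closed_point hK hKc hx
  obtain ⟨k₀, hk₀⟩ := hKne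
  have hf0 : 0 < ‖f‖ := by
    rw [norm_pos_iff]
    intro hf
    have h1 := hfK k₀ hk₀
    rw [hf] at h1 hfx
    simp only [ContinuousLinearMap.zero_apply] at h1 hfx
    linarith
  set c := ‖f‖ with hc
  have hrc : c * (δ' + δ) / (2 * δ) < c := by
    rw [div_lt_iff₀ (by linarith)]
    nlinarith
  obtain ⟨v, hv1, hvr⟩ := f.exists_lt_apply_of_lt_opNorm hrc
  obtain ⟨w, hw1, hwr⟩ : ∃ w : E, ‖w‖ < 1 ∧ c * (δ' + δ) / (2 * δ) < f w := by
    rcases le_or_gt 0 (f v) with hs | hs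
    · exact ⟨v, hv1, by rwa [Real.norm_eq_abs, abs_of_nonneg hs] at hvr⟩
    · refine ⟨-v, by simpa using hv1, ?_⟩
      rw [map_neg]
      rwa [Real.norm_eq_abs, abs_of_neg hs] at hvr
  set z := x + δ • w with hzdef
  have hzball : z ∈ Metric.closedBall x δ := by
    rw [Metric.mem_closedBall, dist_eq_norm]
    have hzx : z - x = δ • w := by rw [hzdef]; abel
    rw [hzx, norm_smul, Real.norm_eq_abs, abs_of_nonneg hδ0.le]
    nlinarith [norm_nonneg w]
  have hzth := h hzball
  rw [Metric.mem_cthickening_iff] at hzth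
  have h2 : EMetric.infEdist z K < ENNReal.ofReal (δ' + (δ - δ') / 4) :=
    lt_of_le_of_lt hzth (by rw [ENNReal.ofReal_lt_ofReal_iff (by linarith)]; linarith)
  rw [EMetric.infEdist, EMetric.infEdist_lt_iff] at h2
  obtain ⟨k, hkK, hk⟩ := h2
  have hdk : dist z k < δ' + (δ - δ') / 4 := by rwa [edist_lt_ofReal] at hk
  have h3 : f z - f k ≤ c * dist z k := by
    calc f z - f k = f (z - k) := by rw [map_sub]
    _ ≤ ‖f (z - k)‖ := le_abs_self _
    _ ≤ c * ‖z - k‖ := f.le_opNorm _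
    _ = c * dist z k := by rw [dist_eq_norm]
  have hfz : f z = f x + δ * f w := by
    rw [hzdef, map_add, f.map_smul, smul_eq_mul]
  have h4 : f k < u := hfK k hkK
  have h5 : u < f x := hfx
  have hdr : δ * (c * (δ' + δ) / (2 * δ)) = c * (δ' + δ) / 2 := by
    field_simp
  have h6 : c * (δ' + δ) / 2 < δ * f w := by
    rw [← hdr]
    exact (mul_lt_mul_iff_right₀ hδ0).mpr hwr
  have h7 : c * dist z k ≤ c * (δ' + (δ - δ') / 4) :=
    mul_le_mul_of_nonneg_left hdk.le hf0.le
  nlinarith [mul_pos hf0 (show (0:ℝ) < δ - δ' by linarith)]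

/-- If convex sets `B n → B'` in Hausdorff distance and random vectors with laws
`μn n` converge in distribution to a law `μ` having a continuous bounded density with
respect to Lebesgue measure, then `P[W_n ∈ B_n] → P[W ∈ B']`. -/
theorem stmt4 {p : ℕ}
    (B : ℕ → Set (EuclideanSpace ℝ (Fin p))) (B' : Set (EuclideanSpace ℝ (Fin p)))
    (hBconv : ∀ n, Convex ℝ (B n)) (hB'conv : Convex ℝ B')
    (hH : Tendsto (fun n => EMetric.hausdorffEdist (B n) B') atTop (nhds 0))
    (μn : ℕ → ProbabilityMeasure (EuclideanSpace ℝ (Fin p)))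
    (μ : ProbabilityMeasure (EuclideanSpace ℝ (Fin p)))
    (hweak : Tendsto μn atTop (nhds μ))
    (f : EuclideanSpace ℝ (Fin p) → ℝ≥0)
    (hf : Continuous f) (hfb : ∃ M, ∀ x, f x ≤ M)
    (hdens : (μ : Measure (EuclideanSpace ℝ (Fin p)))
      = volume.withDensity fun x => (f x : ℝ≥0∞)) :
    Tendsto (fun n => (μn n : Measure (EuclideanSpace ℝ (Fin p))) (B n)) atTop
      (nhds ((μ : Measure (EuclideanSpace ℝ (Fin p))) B')) := by
  -- absolute continuity and null frontier
  have habs : (μ : Measure (EuclideanSpace ℝ (Fin p))) ≪ (volume : Measure (EuclideanSpace ℝ (Fin p))) := by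
    rw [hdens]; exact withDensity_absolutelyContinuous _ _
  have hfront : (μ : Measure (EuclideanSpace ℝ (Fin p))) (frontier B') = 0 := habs (hB'conv.addHaar_frontier volume)
  have hclosure : (μ : Measure (EuclideanSpace ℝ (Fin p))) (closure B') = (μ : Measure (EuclideanSpace ℝ (Fin p))) B' := by
    refine le_antisymm ?_ (measure_mono subset_closure)
    calc (μ : Measure (EuclideanSpace ℝ (Fin p))) (closure B') = (μ : Measure (EuclideanSpace ℝ (Fin p))) (B' ∪ frontier B') := by
          rw [← closure_eq_self_union_frontier]
    _ ≤ (μ : Measure (EuclideanSpace ℝ (Fin p))) B' + (μ : Measure (EuclideanSpace ℝ (Fin p))) (frontier B') := measure_union_le _ _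
    _ = (μ : Measure (EuclideanSpace ℝ (Fin p))) B' := by rw [hfront, add_zero]
  have hinterior : (μ : Measure (EuclideanSpace ℝ (Fin p))) (interior B') = (μ : Measure (EuclideanSpace ℝ (Fin p))) B' := by
    refine le_antisymm (measure_mono interior_subset) ?_
    calc (μ : Measure (EuclideanSpace ℝ (Fin p))) B' ≤ (μ : Measure (EuclideanSpace ℝ (Fin p))) (closure B') := measure_mono subset_closure
    _ = (μ : Measure (EuclideanSpace ℝ (Fin p))) (interior B' ∪ frontier B') := by
          rw [← closure_eq_interior_union_frontier]
    _ ≤ (μ : Measure (EuclideanSpace ℝ (Fin p))) (interior B') + (μ : Measure (EuclideanSpace ℝ (Fin p))) (frontier B') := measure_union_le _ _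
    _ = (μ : Measure (EuclideanSpace ℝ (Fin p))) (interior B') := by rw [hfront, add_zero]
  -- upper bound via limsup
  have hup : limsup (fun n => (μn n : Measure (EuclideanSpace ℝ (Fin p))) (B n)) atTop ≤ (μ : Measure (EuclideanSpace ℝ (Fin p))) B' := by
    apply ENNReal.le_of_forall_pos_le_add
    intro ε hε _
    have hmeas : Tendsto (fun r => (μ : Measure (EuclideanSpace ℝ (Fin p))) (Metric.cthickening r B')) (nhds 0)
        (nhds ((μ : Measure (EuclideanSpace ℝ (Fin p))) (closure B'))) :=
      tendsto_measure_cthickening ⟨1, one_pos, measure_ne_top _ _⟩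
    have hlt : (μ : Measure (EuclideanSpace ℝ (Fin p))) (closure B') < (μ : Measure (EuclideanSpace ℝ (Fin p))) B' + ε := by
      rw [hclosure]
      exact ENNReal.lt_add_right (measure_ne_top _ _) (by exact_mod_cast hε.ne')
    have hev : ∀ᶠ r in nhds (0:ℝ),
        (μ : Measure (EuclideanSpace ℝ (Fin p))) (Metric.cthickening r B') < (μ : Measure (EuclideanSpace ℝ (Fin p))) B' + ε :=
      hmeas.eventually_lt_const hlt
    have hev' : ∀ᶠ r in nhdsWithin (0:ℝ) (Set.Ioi 0),
        0 < r ∧ (μ : Measure (EuclideanSpace ℝ (Fin p))) (Metric.cthickening r B') < (μ : Measure (EuclideanSpace ℝ (Fin p))) B' + ε :=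
      (eventually_mem_nhdsWithin.mono fun r hr => hr).and
        (hev.filter_mono nhdsWithin_le_nhds)
    obtain ⟨δ, hδpos, hδ⟩ := hev'.exists
    set F := Metric.cthickening δ B' with hF
    have hBF : ∀ᶠ n in atTop, B n ⊆ F := by
      have hev2 : ∀ᶠ n in atTop, EMetric.hausdorffEdist (B n) B' < ENNReal.ofReal δ :=
        hH.eventually_lt_const (ENNReal.ofReal_pos.mpr hδpos)
      filter_upwards [hev2] with n hn x hx
      rw [hF, Metric.mem_cthickening_iff]
      exact le_trans (EMetric.infEdist_le_hausdorffEdist_of_mem hx) hn.le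
    calc limsup (fun n => (μn n : Measure (EuclideanSpace ℝ (Fin p))) (B n)) atTop
        ≤ limsup (fun n => (μn n : Measure (EuclideanSpace ℝ (Fin p))) F) atTop :=
          limsup_le_limsup (hBF.mono fun n h => measure_mono h)
    _ ≤ (μ : Measure (EuclideanSpace ℝ (Fin p))) F :=
          ProbabilityMeasure.limsup_measure_closed_le_of_tendsto hweak
            Metric.isClosed_cthickening
    _ ≤ (μ : Measure (EuclideanSpace ℝ (Fin p))) B' + ε := hδ.le
  -- lower bound via liminf
  have hlow : (μ : Measure (EuclideanSpace ℝ (Fin p))) B' ≤ liminf (fun n => (μn n : Measure (EuclideanSpace ℝ (Fin p))) (B n)) atTop := by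
    apply ENNReal.le_of_forall_pos_le_add
    intro ε hε _
    -- inner approximating open sets
    set A : ℕ → Set (EuclideanSpace ℝ (Fin p)) := fun k => (Metric.cthickening ((k+1:ℝ)⁻¹) B'ᶜ)ᶜ with hA
    have hAopen : ∀ k, IsOpen (A k) := fun k => Metric.isClosed_cthickening.isOpen_compl
    have hAmono : Monotone A := by
      intro i j hij
      apply Set.compl_subset_compl.mpr
      apply Metric.cthickening_mono
      apply inv_anti₀ (by positivity)
      have : (i:ℝ) ≤ j := by exact_mod_cast hij
      linarith
    have hAmem : ∀ (k : ℕ) (x : EuclideanSpace ℝ (Fin p)), x ∈ A k ↔ ENNReal.ofReal ((k+1:ℝ)⁻¹) < EMetric.infEdist x B'ᶜ := by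
      intro k x
      rw [hA]
      simp only [Set.mem_compl_iff, Metric.mem_cthickening_iff, not_le]
      exact Iff.rfl
    have hAunion : (⋃ k, A k) = interior B' := by
      ext x
      have hint : x ∈ interior B' ↔ 0 < EMetric.infEdist x B'ᶜ := by
        rw [EMetric.infEdist, EMetric.infEdist_pos_iff_notMem_closure, closure_compl, Set.mem_compl_iff,
          not_not]
      simp only [Set.mem_iUnion, hAmem, hint]
      constructor
      · rintro ⟨k, hk⟩
        exact lt_of_le_of_lt zero_le hk
      · intro hx
        obtain ⟨k, hk⟩ := ENNReal.exists_inv_nat_lt hx.ne'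
        refine ⟨k, lt_of_le_of_lt ?_ hk⟩
        rw [ENNReal.ofReal_inv_of_pos (by positivity)]
        apply ENNReal.inv_le_inv.mpr
        rw [show ((k:ℝ)+1 : ℝ) = ((k+1 : ℕ) : ℝ) by push_cast; ring, ENNReal.ofReal_natCast]
        exact_mod_cast Nat.le_succ k
    have hAlim : Tendsto (fun k => (μ : Measure (EuclideanSpace ℝ (Fin p))) (A k)) atTop
        (nhds ((μ : Measure (EuclideanSpace ℝ (Fin p))) (interior B'))) := by
      rw [← hAunion]
      exact tendsto_measure_iUnion_atTop hAmono
    have hlt : (μ : Measure (EuclideanSpace ℝ (Fin p))) B' < (μ : Measure (EuclideanSpace ℝ (Fin p))) (interior B') + ε := by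
      rw [hinterior]
      exact ENNReal.lt_add_right (measure_ne_top _ _) (by exact_mod_cast hε.ne')
    have hev : ∀ᶠ k in atTop, (μ : Measure (EuclideanSpace ℝ (Fin p))) B' < (μ : Measure (EuclideanSpace ℝ (Fin p))) (A k) + ε :=
      (hAlim.add tendsto_const_nhds).eventually (eventually_gt_nhds hlt)
    obtain ⟨k, hk⟩ := hev.exists
    set δ : ℝ := (k+1:ℝ)⁻¹ with hδdef
    have hδpos : 0 < δ := by positivity
    have hev2 : ∀ᶠ n in atTop, EMetric.hausdorffEdist (B n) B' < ENNReal.ofReal (δ/8) :=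
      hH.eventually_lt_const (ENNReal.ofReal_pos.mpr (by linarith))
    have hsub : ∀ᶠ n in atTop, A k ⊆ B n := by
      filter_upwards [hev2] with n hn x hx
      rw [hAmem] at hx
      -- closed ball of radius δ around x lies in B'
      have hxball : Metric.closedBall x δ ⊆ B' := by
        intro y hy
        by_contra hyB
        have h1 : EMetric.infEdist x B'ᶜ ≤ edist x y :=
          EMetric.infEdist_le_edist_of_mem hyB
        have h2 : edist x y ≤ ENNReal.ofReal δ := by
          rw [edist_dist]
          exact ENNReal.ofReal_le_ofReal (by rw [dist_comm]; exact hy)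
        exact absurd (le_trans h1 h2) (not_le.mpr hx)
      set K := closure (B n) with hKdef
      have hKconv : Convex ℝ K := (hBconv n).closure
      have hBnsub : B' ⊆ Metric.cthickening (δ/8) K := by
        intro y hy
        rw [Metric.mem_cthickening_iff]
        calc EMetric.infEdist y K = EMetric.infEdist y (B n) := EMetric.infEdist_closure
        _ ≤ EMetric.hausdorffEdist B' (B n) := EMetric.infEdist_le_hausdorffEdist_of_mem hy
        _ = EMetric.hausdorffEdist (B n) B' := EMetric.hausdorffEdist_comm
        _ ≤ ENNReal.ofReal (δ/8) := hn.le
      have hball2 : Metric.closedBall x (δ/2) ⊆ K := by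
        intro y hy
        refine key_sep hKconv isClosed_closure (δ := δ/2) (δ' := δ/8)
          (by linarith) (by linarith) ?_
        intro w hw
        apply hBnsub
        apply hxball
        rw [Metric.mem_closedBall] at hy hw ⊢
        calc dist w x ≤ dist w y + dist y x := dist_triangle _ _ _
        _ ≤ δ/2 + δ/2 := add_le_add hw hy
        _ = δ := by ring
      have hIntK : (interior K).Nonempty :=
        ⟨x, mem_interior.mpr ⟨Metric.ball x (δ/2),
          (Metric.ball_subset_closedBall).trans hball2, Metric.isOpen_ball,
          Metric.mem_ball_self (by linarith)⟩⟩
      have hspanK : affineSpan ℝ K = ⊤ :=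
        hKconv.interior_nonempty_iff_affineSpan_eq_top.mp hIntK
      have hspanB : affineSpan ℝ (B n) = ⊤ := by
        rw [eq_top_iff, ← hspanK]
        apply affineSpan_le.mpr
        exact closure_minimal (subset_affineSpan ℝ (B n))
          (affineSpan ℝ (B n)).closed_of_finiteDimensional
      obtain ⟨y₀, hy₀⟩ : (interior (B n)).Nonempty :=
        (hBconv n).interior_nonempty_iff_affineSpan_eq_top.mpr hspanB
      set s : ℝ := (δ/2) / (‖x - y₀‖ + 1) with hsdef
      have hx0 : 0 ≤ ‖x - y₀‖ := norm_nonneg _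
      have hspos : 0 < s := by positivity
      set z := x + s • (x - y₀) with hzdef
      have hzK : z ∈ K := by
        apply hball2
        rw [Metric.mem_closedBall, dist_eq_norm]
        have : z - x = s • (x - y₀) := by rw [hzdef]; abel
        rw [this, norm_smul, Real.norm_eq_abs, abs_of_nonneg hspos.le]
        have hseq : s * (‖x - y₀‖ + 1) = δ/2 := by
          rw [hsdef]; field_simp
        nlinarith
      have hxeq : (s/(1+s)) • y₀ + (1/(1+s)) • z = x := by
        have h1s : (1:ℝ) + s ≠ 0 := by positivity
        rw [hzdef]
        match_scalars <;> field_simp <;> ring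
      have hxint : x ∈ interior (B n) := by
        rw [← hxeq]
        exact (hBconv n).combo_interior_closure_mem_interior hy₀ hzK
          (by positivity) (by positivity) (by field_simp; ring)
      exact interior_subset hxint
    have hliminf := ProbabilityMeasure.le_liminf_measure_open_of_tendsto hweak (hAopen k)
    calc (μ : Measure (EuclideanSpace ℝ (Fin p))) B' ≤ (μ : Measure (EuclideanSpace ℝ (Fin p))) (A k) + ε := hk.le
    _ ≤ liminf (fun n => (μn n : Measure (EuclideanSpace ℝ (Fin p))) (A k)) atTop + ε := add_le_add_left hliminf _
    _ ≤ liminf (fun n => (μn n : Measure (EuclideanSpace ℝ (Fin p))) (B n)) atTop + ε :=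
        add_le_add_left (liminf_le_liminf (hsub.mono fun n h => measure_mono h)) _
  exact tendsto_of_le_liminf_of_limsup_le hlow hup
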